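/- arXiv:1302.6427 — 3 statements merged into one kernel-verified Lean document; each statement's English description precedes it below -/
import Mathlib

section
/- Let X be a real random variable with distribution function 𝔽, let X₁,…,X_n be i.i.d. copies of X, let 0 < q < 1, and suppose ξ > ξ_q (the q-quantile). Set δ₁ = 𝔽(ξ) − q. Then the empirical quantile ξ̂_q satisfies: (i) ℙⁿ(ξ̂_q > ξ) ≤ exp(−2nδ₁²); (ii) ℙⁿ(ξ̂_q > ξ) ≤ exp(−nδ₁²/(2(1 − 𝔽(ξ)) + (2/3)δ₁)); (iii) ℙⁿ(ξ̂_q > ξ) ≤ exp(−nδ₁²/(2𝔽(ξ))). -/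
open MeasureTheory Real

/-- The distribution function `𝔽(ξ) = ℙ(X ≤ ξ)` of a law `μ` on `ℝ`. -/
noncomputable def distFun (μ : MeasureTheory.Measure ℝ) (ξ : ℝ) : ℝ :=
  (μ (Set.Iic ξ)).toReal

/-- The `q`-quantile `ξ_q = inf {ξ : 𝔽(ξ) ≥ q}`. -/
noncomputable def quantile (μ : MeasureTheory.Measure ℝ) (q : ℝ) : ℝ :=
  sInf {ξ : ℝ | q ≤ distFun μ ξ}

/-- The empirical distribution function of the samples `ω : Fin n → ℝ`. -/
noncomputable def empDistFun {n : ℕ} (ω : Fin n → ℝ) (ξ : ℝ) : ℝ :=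
  ((Finset.univ.filter fun i => ω i ≤ ξ).card : ℝ) / n

/-- The empirical `q`-quantile `ξ̂_q = inf {ξ : 𝔽_n(ξ) ≥ q}`. -/
noncomputable def empQuantile {n : ℕ} (ω : Fin n → ℝ) (q : ℝ) : ℝ :=
  sInf {ξ : ℝ | q ≤ empDistFun ω ξ}

/-! ### Auxiliary analytic lemmas -/

lemma aux_expBound {t : ℝ} (ht0 : 0 ≤ t) (ht3 : t < 3) :
    Real.exp t ≤ 1 + t + 3 * t ^ 2 / (6 - 2 * t) := by
  set f : ℝ → ℝ := fun s => (1 + s + 3 * s ^ 2 / (6 - 2 * s)) * Real.exp (-s) with hf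
  have key : ∀ x ∈ Set.Icc (0:ℝ) t, 6 - 2 * x ≠ 0 := by
    intro x hx; nlinarith [hx.1, hx.2]
  have hderiv : ∀ x ∈ Set.Ioo (0:ℝ) t, HasDerivAt f
      ((2 * x ^ 3 / (6 - 2 * x) ^ 2) * Real.exp (-x)) x := by
    intro x hx
    have hne : (6 : ℝ) - 2 * x ≠ 0 := by nlinarith [hx.1, hx.2]
    have h1 : HasDerivAt (fun s : ℝ => 1 + s + 3 * s ^ 2 / (6 - 2 * s))
        (1 + (6 * x * (6 - 2 * x) - 3 * x ^ 2 * (-2)) / (6 - 2 * x) ^ 2) x := by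
      have hq : HasDerivAt (fun s : ℝ => 3 * s ^ 2 / (6 - 2 * s))
          ((6 * x * (6 - 2 * x) - 3 * x ^ 2 * (-2)) / (6 - 2 * x) ^ 2) x := by
        have ha : HasDerivAt (fun s : ℝ => 3 * s ^ 2) (6 * x) x := by
          have := (hasDerivAt_pow 2 x).const_mul (3:ℝ)
          exact this.congr_deriv (by ring)
        have hb : HasDerivAt (fun s : ℝ => 6 - 2 * s) (-2) x := by
          simpa using ((hasDerivAt_id x).const_mul (2:ℝ)).const_sub (6:ℝ)
        simpa using ha.fun_div hb hne
      simpa using ((hasDerivAt_id x).const_add (1:ℝ)).fun_add hq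
    have h2 : HasDerivAt (fun s : ℝ => Real.exp (-s)) (-Real.exp (-x)) x := by
      simpa [Function.comp_def] using (Real.hasDerivAt_exp (-x)).comp x (hasDerivAt_neg x)
    have := h1.fun_mul h2
    refine this.congr_deriv ?_
    symm
    field_simp
    ring
  have hmono : MonotoneOn f (Set.Icc 0 t) := by
    apply monotoneOn_of_deriv_nonneg (convex_Icc 0 t)
    · apply ContinuousOn.mul
      · apply ContinuousOn.add (by fun_prop)
        exact ContinuousOn.div (by fun_prop) (by fun_prop) key
      · fun_prop
    · intro x hx
      rw [interior_Icc] at hx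
      exact ((hderiv x hx).differentiableAt).differentiableWithinAt
    · intro x hx
      rw [interior_Icc] at hx
      rw [(hderiv x hx).deriv]
      have hne : (6 : ℝ) - 2 * x ≠ 0 := by nlinarith [hx.1, hx.2]
      have hx0 : (0:ℝ) ≤ x := le_of_lt hx.1
      positivity
  rcases eq_or_lt_of_le ht0 with h | h
  · simp [← h]
  · have h01 : f 0 ≤ f t := hmono (Set.left_mem_Icc.2 ht0) (Set.right_mem_Icc.2 ht0) ht0
    have hf0 : f 0 = 1 := by simp [hf]
    have hft : (1 + t + 3 * t ^ 2 / (6 - 2 * t)) * Real.exp (-t) ≥ 1 := by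
      rw [hf0] at h01; exact h01
    have hexp : Real.exp (-t) = (Real.exp t)⁻¹ := by rw [Real.exp_neg]
    rw [hexp, ge_iff_le, le_mul_inv_iff₀ (Real.exp_pos t), one_mul] at hft
    exact hft

lemma aux_klDerivSetup {a p : ℝ} (ha : 0 < a) (hap : a < p) (hp : p < 1)
    (G : ℝ → ℝ) (G' : ℝ → ℝ)
    (hG : ∀ x ∈ Set.Ioo a p, HasDerivAt G (G' x) x)
    (hGcont : ContinuousOn G (Set.Icc a p))
    (hG0 : G a = 0)
    (hle : ∀ x ∈ Set.Ioo a p, G' x ≤ -(a * x⁻¹) + (1 - a) * (1 - x)⁻¹) :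
    G p ≤ a * (Real.log a - Real.log p) + (1 - a) * (Real.log (1 - a) - Real.log (1 - p)) := by
  set F : ℝ → ℝ := fun x =>
    a * (Real.log a - Real.log x) + (1 - a) * (Real.log (1 - a) - Real.log (1 - x)) - G x with hF
  have hder : ∀ x ∈ Set.Ioo a p, HasDerivAt F
      (a * -x⁻¹ + (1 - a) * -((1 - x)⁻¹ * -1) - G' x) x := by
    intro x hx
    have hx0 : (0:ℝ) < x := lt_trans ha hx.1
    have hx1 : x < 1 := lt_trans hx.2 hp
    have h1 : HasDerivAt (fun y : ℝ => Real.log y) x⁻¹ x := Real.hasDerivAt_log hx0.ne'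
    have h2 : HasDerivAt (fun y : ℝ => (1:ℝ) - y) (-1) x := by
      simpa using (hasDerivAt_id x).const_sub (1:ℝ)
    have h3 : HasDerivAt (fun y : ℝ => Real.log (1 - y)) ((1 - x)⁻¹ * -1) x :=
      (Real.hasDerivAt_log (by nlinarith : (1:ℝ) - x ≠ 0)).comp x h2
    exact (((h1.const_sub (Real.log a)).const_mul a).add
      ((h3.const_sub (Real.log (1 - a))).const_mul (1 - a))).sub (hG x hx)
  have hmono : MonotoneOn F (Set.Icc a p) := by
    apply monotoneOn_of_deriv_nonneg (convex_Icc a p)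
    · apply ContinuousOn.sub _ hGcont
      apply ContinuousOn.add
      · apply ContinuousOn.mul continuousOn_const
        apply ContinuousOn.sub continuousOn_const
        exact ContinuousOn.log continuousOn_id fun x hx => by nlinarith [hx.1]
      · apply ContinuousOn.mul continuousOn_const
        apply ContinuousOn.sub continuousOn_const
        exact ContinuousOn.log (continuousOn_const.sub continuousOn_id)
          fun x hx => by nlinarith [hx.2]
    · intro x hx
      rw [interior_Icc] at hx
      exact (hder x hx).differentiableAt.differentiableWithinAt
    · intro x hx
      rw [interior_Icc] at hx
      rw [(hder x hx).deriv]
      have := hle x hx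
      nlinarith [this]
  have h := hmono (Set.left_mem_Icc.2 hap.le) (Set.right_mem_Icc.2 hap.le) hap.le
  have hFa : F a = 0 := by simp [hF, hG0]
  rw [hFa] at h
  simp only [hF] at h
  linarith

lemma aux_klGe1 {a p : ℝ} (ha : 0 < a) (hap : a < p) (hp : p < 1) :
    2 * (p - a) ^ 2 ≤
      a * (Real.log a - Real.log p) + (1 - a) * (Real.log (1 - a) - Real.log (1 - p)) := by
  have := aux_klDerivSetup ha hap hp (fun x => 2 * (x - a) ^ 2) (fun x => 4 * (x - a))
    (fun x hx => by
      have : HasDerivAt (fun y : ℝ => (y - a) ^ 2) (2 * (x - a)) x := by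
        simpa using ((hasDerivAt_id x).sub_const a).fun_pow 2
      have := this.const_mul (2:ℝ)
      exact this.congr_deriv (by ring))
    (by fun_prop) (by ring)
    (fun x hx => by
      have hx0 : (0:ℝ) < x := lt_trans ha hx.1
      have hx1 : x < 1 := lt_trans hx.2 hp
      have hxne : x ≠ 0 := hx0.ne'
      have hx1ne : (1:ℝ) - x ≠ 0 := by nlinarith
      have key : -(a * x⁻¹) + (1 - a) * (1 - x)⁻¹ - 4 * (x - a)
          = (x - a) * (1 - 2 * x) ^ 2 / (x * (1 - x)) := by
        field_simp
        ring
      have h1 : (0:ℝ) ≤ (x - a) * (1 - 2 * x) ^ 2 / (x * (1 - x)) :=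
        div_nonneg (mul_nonneg (by linarith [hx.1]) (sq_nonneg _)) (by nlinarith)
      linarith [key, h1])
  simpa using this

lemma aux_klGe3 {a p : ℝ} (ha : 0 < a) (hap : a < p) (hp : p < 1) :
    (p - a) ^ 2 / (2 * p) ≤
      a * (Real.log a - Real.log p) + (1 - a) * (Real.log (1 - a) - Real.log (1 - p)) := by
  have hp0 : (0:ℝ) < p := lt_trans ha hap
  have := aux_klDerivSetup ha hap hp (fun x => (x - a) ^ 2 / (2 * p)) (fun x => (x - a) / p)
    (fun x hx => by
      have : HasDerivAt (fun y : ℝ => (y - a) ^ 2) (2 * (x - a)) x := by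
        simpa using ((hasDerivAt_id x).sub_const a).fun_pow 2
      have := this.div_const (2 * p)
      refine this.congr_deriv ?_
      field_simp)
    (by fun_prop) (by simp)
    (fun x hx => by
      have hx0 : (0:ℝ) < x := lt_trans ha hx.1
      have hx1 : x < 1 := lt_trans hx.2 hp
      have hxne : x ≠ 0 := hx0.ne'
      have hx1ne : (1:ℝ) - x ≠ 0 := by nlinarith
      have hpne : p ≠ 0 := hp0.ne'
      have key : -(a * x⁻¹) + (1 - a) * (1 - x)⁻¹ - (x - a) / p
          = (x - a) * (p - x * (1 - x)) / (x * (1 - x) * p) := by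
        field_simp
        ring
      have h1 : (0:ℝ) ≤ (x - a) * (p - x * (1 - x)) / (x * (1 - x) * p) := by
        apply div_nonneg
        · apply mul_nonneg (by linarith [hx.1])
          nlinarith [hx.2]
        · exact le_of_lt (mul_pos (mul_pos hx0 (by linarith)) hp0)
      linarith [key, h1])
  simpa using this

lemma aux_chooseT {a p : ℝ} (ha : 0 < a) (hap : a < p) (hp : p < 1) :
    ∃ t ≥ 0, t * a + Real.log (1 - p + p * Real.exp (-t)) =
      -(a * (Real.log a - Real.log p) + (1 - a) * (Real.log (1 - a) - Real.log (1 - p))) := by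
  have hp0 : (0:ℝ) < p := lt_trans ha hap
  have ha1 : a < 1 := lt_trans hap hp
  have h1a : (0:ℝ) < 1 - a := by linarith
  have h1p : (0:ℝ) < 1 - p := by linarith
  have harg : (0:ℝ) < p * (1 - a) / (a * (1 - p)) :=
    div_pos (mul_pos hp0 h1a) (mul_pos ha h1p)
  refine ⟨Real.log (p * (1 - a) / (a * (1 - p))), ?_, ?_⟩
  · apply Real.log_nonneg
    rw [le_div_iff₀ (mul_pos ha h1p)]
    nlinarith
  · have hexp : Real.exp (-Real.log (p * (1 - a) / (a * (1 - p))))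
        = a * (1 - p) / (p * (1 - a)) := by
      rw [Real.exp_neg, Real.exp_log harg, inv_div]
    rw [hexp]
    have harg2 : 1 - p + p * (a * (1 - p) / (p * (1 - a))) = (1 - p) / (1 - a) := by
      field_simp
      ring
    rw [harg2, Real.log_div h1p.ne' h1a.ne', Real.log_div (mul_pos hp0 h1a).ne'
      (mul_pos ha h1p).ne', Real.log_mul hp0.ne' h1a.ne', Real.log_mul ha.ne' h1p.ne']
    ring

lemma aux_chooseT2 {a p : ℝ} (ha : 0 < a) (hap : a < p) (hp : p < 1) :
    ∃ t ≥ 0, t * a + Real.log (1 - p + p * Real.exp (-t)) ≤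
      -((p - a) ^ 2 / (2 * (1 - p) + 2 / 3 * (p - a))) := by
  have hp0 : (0:ℝ) < p := lt_trans ha hap
  have h1p : (0:ℝ) < 1 - p := by linarith
  have hδ : (0:ℝ) < p - a := by linarith
  have hD : (0:ℝ) < 3 * (1 - p) + (p - a) := by linarith
  set t : ℝ := 3 * (p - a) / (3 * (1 - p) + (p - a)) with ht
  have ht0 : 0 ≤ t := div_nonneg (by linarith) hD.le
  have ht3 : t < 3 := by
    rw [ht, div_lt_iff₀ hD]; linarith
  have h62 : (0:ℝ) < 6 - 2 * t := by linarith
  refine ⟨t, ht0, ?_⟩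
  have hposarg : (0:ℝ) < p + (1 - p) * Real.exp t := by positivity
  have hsplit : 1 - p + p * Real.exp (-t) = Real.exp (-t) * (p + (1 - p) * Real.exp t) := by
    rw [Real.exp_neg]
    field_simp
    ring
  have hlog : Real.log (1 - p + p * Real.exp (-t)) = -t + Real.log (p + (1 - p) * Real.exp t) := by
    rw [hsplit, Real.log_mul (Real.exp_ne_zero _) hposarg.ne', Real.log_exp]
  rw [hlog]
  have hlog2 : Real.log (p + (1 - p) * Real.exp t) ≤ (1 - p) * (Real.exp t - 1) := by
    have := Real.log_le_sub_one_of_pos hposarg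
    nlinarith [this]
  have hexp : Real.exp t - 1 ≤ t + 3 * t ^ 2 / (6 - 2 * t) := by
    have := aux_expBound ht0 ht3
    linarith
  have step : t * a + (-t + Real.log (p + (1 - p) * Real.exp t)) ≤
      t * a - t + (1 - p) * (t + 3 * t ^ 2 / (6 - 2 * t)) := by
    have h2 : (1 - p) * (Real.exp t - 1) ≤ (1 - p) * (t + 3 * t ^ 2 / (6 - 2 * t)) := by
      apply mul_le_mul_of_nonneg_left hexp h1p.le
    nlinarith [hlog2, h2]
  refine le_trans step (le_of_eq ?_)
  have hD2 : (0:ℝ) < 2 * (1 - p) + 2 / 3 * (p - a) := by linarith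
  have h62' : 6 - 2 * t = 18 * (1 - p) / (3 * (1 - p) + (p - a)) := by
    rw [ht]; field_simp; ring
  rw [h62', ht]
  field_simp
  ring

/-! ### Measure-theoretic core -/

lemma aux_prodIntegral (μ : Measure ℝ) [IsProbabilityMeasure μ] (n : ℕ) (f : ℝ → ℝ)
    (hf : Integrable f μ) :
    Integrable (fun ω : Fin n → ℝ => ∏ i, f (ω i)) (Measure.pi fun _ => μ) ∧
    ∫ ω : Fin n → ℝ, ∏ i, f (ω i) ∂(Measure.pi fun _ => μ) = (∫ x, f x ∂μ) ^ n := by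
  letI : MeasureSpace ℝ := ⟨μ⟩
  haveI : SigmaFinite (volume : Measure ℝ) := by
    show SigmaFinite μ; infer_instance
  have h1 : Integrable (fun ω : Fin n → ℝ => ∏ i, f (ω i)) volume :=
    Integrable.fintype_prod (f := fun _ : Fin n => f) (fun _ => hf)
  have h2 := MeasureTheory.integral_fintype_prod_eq_pow (𝕜 := ℝ) (ι := Fin n) f (μ := volume)
  rw [Fintype.card_fin] at h2
  exact ⟨h1, h2⟩

lemma aux_coreBound (μ : Measure ℝ) [IsProbabilityMeasure μ] (n : ℕ) (ξ q t : ℝ) (ht : 0 ≤ t) :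
    ((Measure.pi fun _ : Fin n => μ) {ω | empDistFun ω ξ < q}).toReal ≤
      Real.exp (t * q * n) *
        (1 - distFun μ ξ + distFun μ ξ * Real.exp (-t)) ^ n := by
  set p := distFun μ ξ with hpdef
  set c := Real.exp (-t) with hcdef
  have hc0 : 0 < c := Real.exp_pos _
  have hc1 : c ≤ 1 := by
    rw [hcdef]; exact Real.exp_le_one_iff.2 (by linarith)
  set f : ℝ → ℝ := fun x => if x ≤ ξ then c else 1 with hfdef
  have hfmeas : Measurable f := Measurable.ite measurableSet_Iic measurable_const measurable_const
  have hfpos : ∀ x, 0 < f x := by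
    intro x; rw [hfdef]
    dsimp only
    split_ifs
    · exact hc0
    · norm_num
  have hfint : Integrable f μ := by
    apply Integrable.mono' (integrable_const 1) hfmeas.aestronglyMeasurable
    filter_upwards with x
    rcases le_or_gt x ξ with h | h
    · simp [hfdef, h, abs_of_pos hc0, hc1]
    · simp [hfdef, not_le.2 h]
  have hfval : ∫ x, f x ∂μ = 1 - p + p * c := by
    have heq : f = fun x => (Set.Iic ξ).indicator (fun _ => c - 1) x + 1 := by
      funext x
      by_cases h : x ≤ ξ <;> simp [hfdef, Set.indicator, h]
    rw [heq, integral_add ((integrable_const (c - 1)).indicator measurableSet_Iic)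
      (integrable_const 1), integral_indicator_const _ measurableSet_Iic, integral_const]
    simp [measure_univ, hpdef, distFun, measureReal_def]
    ring
  set S : (Fin n → ℝ) → ℝ := fun ω => ∑ i, if ω i ≤ ξ then (1:ℝ) else 0 with hSdef
  have hSmeas : Measurable S :=
    Finset.measurable_sum _ fun i _ => Measurable.ite
      (measurableSet_le (measurable_pi_apply i) measurable_const)
      measurable_const measurable_const
  have hempS : ∀ ω : Fin n → ℝ, empDistFun ω ξ = S ω / n := by
    intro ω
    rw [empDistFun, hSdef]
    congr 1
    rw [Finset.card_filter]
    push_cast [apply_ite (Nat.cast : ℕ → ℝ)]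
    rfl
  set A : Set (Fin n → ℝ) := {ω | empDistFun ω ξ < q} with hAdef
  have hAeq : A = {ω | S ω / n < q} := by
    ext ω; simp [hAdef, hempS ω]
  have hA : MeasurableSet A := by
    rw [hAeq]
    exact measurableSet_lt (hSmeas.div_const _) measurable_const
  have hprod : ∀ ω : Fin n → ℝ, ∏ i, f (ω i) = Real.exp (-t * S ω) := by
    intro ω
    rw [hSdef]
    dsimp only
    rw [Finset.mul_sum, Real.exp_sum]
    apply Finset.prod_congr rfl
    intro i _
    rw [hfdef]
    dsimp only
    split_ifs with h
    · rw [hcdef]; norm_num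
    · norm_num
  have hSn : ∀ ω, ω ∈ A → S ω ≤ q * n := by
    intro ω hω
    rcases Nat.eq_zero_or_pos n with hn | hn
    · subst hn
      simp [hSdef]
    · rw [hAeq] at hω
      have := (div_lt_iff₀ (by exact_mod_cast hn : (0:ℝ) < n)).1 hω
      linarith
  have hpoint : ∀ ω, A.indicator (fun _ => (1:ℝ)) ω ≤ Real.exp (t * q * n) * ∏ i, f (ω i) := by
    intro ω
    by_cases hω : ω ∈ A
    · rw [Set.indicator_of_mem hω, hprod, ← Real.exp_add]
      apply Real.one_le_exp
      have h1 := hSn ω hω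
      have : t * q * n + -t * S ω = t * (q * n - S ω) := by ring
      rw [this]
      exact mul_nonneg ht (by linarith)
    · rw [Set.indicator_of_notMem hω]
      exact le_of_lt (mul_pos (Real.exp_pos _) (Finset.prod_pos fun i _ => hfpos _))
  have hPI := aux_prodIntegral μ n f hfint
  calc ((Measure.pi fun _ : Fin n => μ) A).toReal
      = ∫ ω, A.indicator (fun _ => (1:ℝ)) ω ∂(Measure.pi fun _ : Fin n => μ) := by
        rw [integral_indicator_const _ hA]; simp [measureReal_def]
    _ ≤ ∫ ω, Real.exp (t * q * n) * ∏ i, f (ω i) ∂(Measure.pi fun _ : Fin n => μ) :=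
        integral_mono ((integrable_const (1:ℝ)).indicator hA) (hPI.1.const_mul _) hpoint
    _ = Real.exp (t * q * n) * (∫ x, f x ∂μ) ^ n := by
        rw [MeasureTheory.integral_const_mul, hPI.2]
    _ = Real.exp (t * q * n) * (1 - p + p * c) ^ n := by rw [hfval]

/-! ### Quantile reduction lemmas -/

lemma aux_distFun_mono (μ : Measure ℝ) [IsProbabilityMeasure μ] : Monotone (distFun μ) := by
  intro x y hxy
  exact ENNReal.toReal_mono (measure_ne_top μ _) (measure_mono (Set.Iic_subset_Iic.2 hxy))

lemma aux_q_le_distFun (μ : Measure ℝ) [IsProbabilityMeasure μ] {q ξ : ℝ}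
    (hq0 : 0 < q) (hq1 : q < 1) (hξ : quantile μ q < ξ) : q ≤ distFun μ ξ := by
  set T : Set ℝ := {η : ℝ | q ≤ distFun μ η} with hT
  have hne : T.Nonempty := by
    have h1 : Filter.Tendsto (fun x => μ (Set.Iic x)) Filter.atTop (nhds (μ Set.univ)) :=
      tendsto_measure_Iic_atTop μ
    have h2 : Filter.Tendsto (fun x => distFun μ x) Filter.atTop (nhds 1) := by
      have := (ENNReal.tendsto_toReal (measure_ne_top μ Set.univ)).comp h1
      simpa [distFun, Function.comp_def] using this
    have h3 : ∀ᶠ x in Filter.atTop, q ≤ distFun μ x :=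
      h2.eventually (eventually_ge_nhds hq1)
    rcases h3.exists with ⟨x, hx⟩
    exact ⟨x, hx⟩
  have hbdd : BddBelow T := by
    have h0 : Filter.Tendsto (fun k : ℕ => μ (Set.Iic (-(k:ℝ)))) Filter.atTop (nhds 0) := by
      have hI : ⋂ k : ℕ, Set.Iic (-(k:ℝ)) = ∅ := by
        ext x
        simp only [Set.mem_iInter, Set.mem_Iic, Set.mem_empty_iff_false, iff_false, not_forall,
          not_le]
        rcases exists_nat_gt (-x) with ⟨k, hk⟩
        exact ⟨k, by linarith⟩
      have := tendsto_measure_iInter_atTop (μ := μ) (s := fun k : ℕ => Set.Iic (-(k:ℝ)))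
        (fun k => (measurableSet_Iic).nullMeasurableSet)
        (fun i j hij => Set.Iic_subset_Iic.2 (by exact_mod_cast neg_le_neg (Nat.cast_le.2 hij)))
        ⟨0, measure_ne_top μ _⟩
      rw [hI] at this
      simpa [Function.comp_def] using this
    have h4 : ∀ᶠ k : ℕ in Filter.atTop, μ (Set.Iic (-(k:ℝ))) < ENNReal.ofReal q := by
      apply h0.eventually_lt_const
      simp [hq0]
    rcases h4.exists with ⟨k, hk⟩
    refine ⟨-(k:ℝ), fun η hη => ?_⟩
    by_contra hlt
    push_neg at hlt
    have : distFun μ η < q := by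
      have hle : μ (Set.Iic η) ≤ μ (Set.Iic (-(k:ℝ))) :=
        measure_mono (Set.Iic_subset_Iic.2 hlt.le)
      exact ENNReal.toReal_lt_of_lt_ofReal (lt_of_le_of_lt hle hk)
    exact absurd hη (not_le.2 this)
  rcases (csInf_lt_iff hbdd hne).1 hξ with ⟨η, hηT, hηξ⟩
  exact le_trans hηT (aux_distFun_mono μ hηξ.le)

lemma aux_event_subset {n : ℕ} (q ξ : ℝ) (hq0 : 0 < q) :
    {ω : Fin n → ℝ | ξ < empQuantile ω q} ⊆ {ω : Fin n → ℝ | empDistFun ω ξ < q} := by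
  intro ω hω
  simp only [Set.mem_setOf_eq] at hω ⊢
  rcases Nat.eq_zero_or_pos n with hn | hn
  · subst hn
    simp [empDistFun]
    exact hq0
  · by_contra hc
    push_neg at hc
    have hTne : Nonempty (Fin n) := Fin.pos_iff_nonempty.1 hn
    have hbdd : BddBelow {η : ℝ | q ≤ empDistFun ω η} := by
      refine ⟨Finset.univ.inf' (Finset.univ_nonempty) ω, fun η hη => ?_⟩
      by_contra hlt
      push_neg at hlt
      have hempty : (Finset.univ.filter fun i => ω i ≤ η) = ∅ := by
        apply Finset.filter_false_of_mem
        intro i _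
        push_neg
        exact lt_of_lt_of_le hlt (Finset.inf'_le ω (Finset.mem_univ i))
      have : empDistFun ω η = 0 := by simp [empDistFun, hempty]
      rw [Set.mem_setOf_eq, this] at hη
      linarith
    have : empQuantile ω q ≤ ξ := csInf_le hbdd hc
    linarith

theorem stmt11 (μ : Measure ℝ) [IsProbabilityMeasure μ]
    (n : ℕ) (q : ℝ) (hq0 : 0 < q) (hq1 : q < 1)
    (ξ : ℝ) (hξ : quantile μ q < ξ)
    (δ₁ : ℝ) (hδ₁ : δ₁ = distFun μ ξ - q) :
    ((Measure.pi fun _ : Fin n => μ) {ω | ξ < empQuantile ω q}).toReal ≤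
        Real.exp (-2 * n * δ₁ ^ 2) ∧
    ((Measure.pi fun _ : Fin n => μ) {ω | ξ < empQuantile ω q}).toReal ≤
        Real.exp (-(n * δ₁ ^ 2) / (2 * (1 - distFun μ ξ) + 2 / 3 * δ₁)) ∧
    ((Measure.pi fun _ : Fin n => μ) {ω | ξ < empQuantile ω q}).toReal ≤
        Real.exp (-(n * δ₁ ^ 2) / (2 * distFun μ ξ)) := by
  set p := distFun μ ξ with hp
  have hqp : q ≤ p := aux_q_le_distFun μ hq0 hq1 hξ
  have hp0 : 0 < p := lt_of_lt_of_le hq0 hqp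
  have hp1 : p ≤ 1 := by
    rw [hp]
    calc (μ (Set.Iic ξ)).toReal
        ≤ (μ Set.univ).toReal :=
          ENNReal.toReal_mono (measure_ne_top _ _) (measure_mono (Set.subset_univ _))
      _ = 1 := by simp
  have hδ0 : 0 ≤ δ₁ := by rw [hδ₁]; linarith
  set M := ((Measure.pi fun _ : Fin n => μ) {ω | ξ < empQuantile ω q}).toReal with hM
  have hMle1 : M ≤ 1 := by
    rw [hM]
    calc ((Measure.pi fun _ : Fin n => μ) {ω | ξ < empQuantile ω q}).toReal
        ≤ ((Measure.pi fun _ : Fin n => μ) Set.univ).toReal :=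
          ENNReal.toReal_mono (measure_ne_top _ _) (measure_mono (Set.subset_univ _))
      _ = 1 := by simp
  have hMA : M ≤ ((Measure.pi fun _ : Fin n => μ) {ω | empDistFun ω ξ < q}).toReal := by
    rw [hM]
    exact ENNReal.toReal_mono (measure_ne_top _ _) (measure_mono (aux_event_subset q ξ hq0))
  have hCore : ∀ t, 0 ≤ t → M ≤ Real.exp (t * q * n) * (1 - p + p * Real.exp (-t)) ^ n :=
    fun t ht => hMA.trans (aux_coreBound μ n ξ q t ht)
  rcases Nat.eq_zero_or_pos n with hn | hn
  · subst hn
    refine ⟨?_, ?_, ?_⟩ <;> simpa using hMle1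
  rcases eq_or_lt_of_le hδ0 with hδe | hδpos
  · refine ⟨?_, ?_, ?_⟩ <;> · simp [← hδe]; simpa using hMle1
  have hqp' : q < p := by rw [hδ₁] at hδpos; rw [hp]; linarith
  rcases eq_or_lt_of_le hp1 with hpe | hplt
  · -- p = 1
    have hn0 : (0:ℝ) < n := by exact_mod_cast hn
    have h1q : (0:ℝ) < 1 - q := by linarith
    have hP1 : ∀ X : ℝ, 0 ≤ X → M ≤ Real.exp (-X) := by
      intro X hX
      set t := X / (n * (1 - q)) with htdef
      have ht0 : 0 ≤ t := div_nonneg hX (le_of_lt (mul_pos hn0 h1q))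
      have hc := hCore t ht0
      have hsim : 1 - p + p * Real.exp (-t) = Real.exp (-t) := by rw [hpe]; ring
      rw [hsim, ← Real.exp_nat_mul, ← Real.exp_add] at hc
      refine hc.trans (le_of_eq ?_)
      congr 1
      have hX' : t * ((n:ℝ) * (1 - q)) = X := by
        rw [htdef]; field_simp
      nlinarith [hX']
    refine ⟨?_, ?_, ?_⟩
    · have h := hP1 (2 * n * δ₁ ^ 2) (by positivity)
      convert h using 2
      ring
    · have hDe : 2 * (1 - p) + 2 / 3 * δ₁ = 2 / 3 * δ₁ := by rw [hpe]; ring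
      have hD : 0 < 2 * (1 - p) + 2 / 3 * δ₁ := by rw [hDe]; linarith
      have h := hP1 ((n * δ₁ ^ 2) / (2 * (1 - p) + 2 / 3 * δ₁))
        (div_nonneg (by positivity) hD.le)
      convert h using 2
      rw [neg_div]
    · have h := hP1 ((n * δ₁ ^ 2) / (2 * p)) (div_nonneg (by positivity) (by linarith))
      convert h using 2
      rw [neg_div]
  · -- main case : 0 < q < p < 1
    have key : ∀ K : ℝ, (∃ t ≥ 0, t * q + Real.log (1 - p + p * Real.exp (-t)) ≤ -K) →
        M ≤ Real.exp ((n : ℝ) * -K) := by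
      rintro K ⟨t, ht0, hle⟩
      have hB : 0 < 1 - p + p * Real.exp (-t) := by
        have := mul_pos hp0 (Real.exp_pos (-t))
        linarith
      have hc := hCore t ht0
      rw [← Real.exp_log hB, ← Real.exp_nat_mul, ← Real.exp_add] at hc
      refine hc.trans (Real.exp_le_exp.2 ?_)
      have heq : t * q * (n:ℝ) + (n:ℝ) * Real.log (1 - p + p * Real.exp (-t))
          = (n:ℝ) * (t * q + Real.log (1 - p + p * Real.exp (-t))) := by ring
      rw [heq]
      exact mul_le_mul_of_nonneg_left hle (Nat.cast_nonneg n)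
    obtain ⟨t0, ht00, hval⟩ := aux_chooseT hq0 hqp' hplt
    refine ⟨?_, ?_, ?_⟩
    · have h := key (2 * (p - q) ^ 2)
        ⟨t0, ht00, by rw [hval]; exact neg_le_neg (aux_klGe1 hq0 hqp' hplt)⟩
      convert h using 2
      rw [hδ₁]
      ring
    · have h := key ((p - q) ^ 2 / (2 * (1 - p) + 2 / 3 * (p - q)))
        (aux_chooseT2 hq0 hqp' hplt)
      convert h using 2
      rw [hδ₁]
      ring
    · have h := key ((p - q) ^ 2 / (2 * p))
        ⟨t0, ht00, by rw [hval]; exact neg_le_neg (aux_klGe3 hq0 hqp' hplt)⟩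
      convert h using 2
      rw [hδ₁]
      ring
end

section
/- Let X be a real random variable, let X₁,…,X_n be i.i.d. copies of X, let 0 < p < 1, and let D_n = max_{i=1,…,n} X_i − min_{i=1,…,n} X_i denote the empirical range. Then ℙⁿ(D_n < ξ_p − ξ_{1−p}) ≤ 2·exp(−n(1−p)/2), where ξ_q denotes the q-quantile of X. -/
open MeasureTheory Real
open scoped ENNReal

section aux

variable (μ : Measure ℝ) [IsProbabilityMeasure μ]

lemma distFun_mono : Monotone (distFun μ) := fun x y hxy =>
  ENNReal.toReal_mono (measure_ne_top μ _) (measure_mono (Set.Iic_subset_Iic.2 hxy))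

lemma distFun_eq (ξ : ℝ) : ENNReal.ofReal (distFun μ ξ) = μ (Set.Iic ξ) := by
  rw [distFun, ENNReal.ofReal_toReal (measure_ne_top μ _)]

lemma quantile_set_nonempty {q : ℝ} (hq : q < 1) :
    {ξ : ℝ | q ≤ distFun μ ξ}.Nonempty := by
  have h1 : μ Set.univ = 1 := measure_univ
  have h := tendsto_measure_Iic_atTop (α := ℝ) μ
  rw [h1] at h
  have hq' : ENNReal.ofReal q < 1 := ENNReal.ofReal_lt_one.2 hq
  have : ∀ᶠ ξ in Filter.atTop, ENNReal.ofReal q < μ (Set.Iic ξ) :=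
    h.eventually (eventually_gt_nhds hq')
  obtain ⟨ξ, hξ⟩ := this.exists
  refine ⟨ξ, ?_⟩
  rcases le_or_gt q 0 with hq0 | hq0
  · exact le_trans hq0 ENNReal.toReal_nonneg
  · have := ENNReal.toReal_mono (measure_ne_top μ _) hξ.le
    rwa [ENNReal.toReal_ofReal hq0.le] at this

lemma quantile_set_bddBelow {q : ℝ} (hq : 0 < q) :
    BddBelow {ξ : ℝ | q ≤ distFun μ ξ} := by
  -- μ (Iic (-(k:ℝ))) → μ ∅ = 0
  have hanti : Antitone fun k : ℕ => Set.Iic (-(k : ℝ)) := fun i j hij =>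
    Set.Iic_subset_Iic.2 (by exact_mod_cast neg_le_neg (by exact_mod_cast hij))
  have hint : ⋂ k : ℕ, Set.Iic (-(k : ℝ)) = ∅ := by
    ext x
    simp only [Set.mem_iInter, Set.mem_Iic, Set.mem_empty_iff_false, iff_false, not_forall]
    obtain ⟨k, hk⟩ := exists_nat_gt (-x)
    exact ⟨k, by push_neg; linarith⟩
  have h := tendsto_measure_iInter_atTop (μ := μ)
    (fun k => (measurableSet_Iic).nullMeasurableSet) hanti ⟨0, measure_ne_top μ _⟩
  rw [hint, measure_empty] at h
  have : ∀ᶠ k : ℕ in Filter.atTop, μ (Set.Iic (-(k:ℝ))) < ENNReal.ofReal q :=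
    h.eventually (eventually_lt_nhds (by simp [hq]))
  obtain ⟨k, hk⟩ := this.exists
  refine ⟨-(k:ℝ), fun s hs => ?_⟩
  by_contra hlt
  push_neg at hlt
  have : μ (Set.Iic s) < ENNReal.ofReal q :=
    lt_of_le_of_lt (measure_mono (Set.Iic_subset_Iic.2 hlt.le)) hk
  have hle : q ≤ distFun μ s := hs
  rw [← distFun_eq μ s] at this
  exact absurd hle (not_le.2 (by
    have := (ENNReal.ofReal_lt_ofReal_iff_of_nonneg (by
      exact ENNReal.toReal_nonneg)).1 this
    linarith))

/-- Right-continuity: the quantile achieves `q ≤ F(ξ_q)`. -/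
lemma distFun_quantile_ge {q : ℝ} (hq0 : 0 < q) (hq1 : q < 1) :
    q ≤ distFun μ (quantile μ q) := by
  set S := {ξ : ℝ | q ≤ distFun μ ξ} with hS
  have hne := quantile_set_nonempty μ hq1
  have hbdd := quantile_set_bddBelow μ hq0
  set b := quantile μ q with hb
  -- for every ε > 0, b + ε ∈ S
  have hmem : ∀ ε : ℝ, 0 < ε → q ≤ distFun μ (b + ε) := by
    intro ε hε
    obtain ⟨s, hs, hslt⟩ := Real.lt_sInf_add_pos hne hε
    exact le_trans hs (distFun_mono μ (le_of_lt hslt))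
  -- μ (Iic (b + 1/(k+1))) → μ (Iic b)
  have hanti : Antitone fun k : ℕ => Set.Iic (b + 1 / ((k:ℝ) + 1)) := by
    intro i j hij
    apply Set.Iic_subset_Iic.2
    have : (1:ℝ) / ((j:ℝ)+1) ≤ 1 / ((i:ℝ)+1) := by
      apply one_div_le_one_div_of_le (by positivity)
      have : (i:ℝ) ≤ j := by exact_mod_cast hij
      linarith
    linarith
  have hint : ⋂ k : ℕ, Set.Iic (b + 1 / ((k:ℝ) + 1)) = Set.Iic b := by
    ext x
    simp only [Set.mem_iInter, Set.mem_Iic]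
    constructor
    · intro h
      by_contra hx
      push_neg at hx
      obtain ⟨k, hk⟩ := exists_nat_gt (1 / (x - b))
      have hk0 : 0 < 1 / (x - b) := by
        apply div_pos one_pos; linarith
      have : 1 / ((k:ℝ) + 1) < x - b := by
        rw [div_lt_iff₀ (by positivity)]
        rw [div_lt_iff₀ (by linarith)] at hk
        nlinarith
      linarith [h k]
    · intro h k
      have : (0:ℝ) < 1 / ((k:ℝ)+1) := by positivity
      linarith
  have h := tendsto_measure_iInter_atTop (μ := μ)
    (fun k => (measurableSet_Iic).nullMeasurableSet) hanti ⟨0, measure_ne_top μ _⟩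
  rw [hint] at h
  have hge : ENNReal.ofReal q ≤ μ (Set.Iic b) := by
    refine ge_of_tendsto h (Filter.Eventually.of_forall fun k => ?_)
    have := hmem (1 / ((k:ℝ)+1)) (by positivity)
    calc ENNReal.ofReal q ≤ ENNReal.ofReal (distFun μ (b + 1/((k:ℝ)+1))) :=
          ENNReal.ofReal_le_ofReal this
      _ = μ (Set.Iic (b + 1/((k:ℝ)+1))) := distFun_eq μ _
  have := ENNReal.toReal_mono (measure_ne_top μ _) hge
  rwa [ENNReal.toReal_ofReal hq0.le] at this

/-- `μ (Iio ξ_q) ≤ q`. -/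
lemma measure_Iio_quantile_le {q : ℝ} (hq0 : 0 < q) (hq1 : q < 1) :
    μ (Set.Iio (quantile μ q)) ≤ ENNReal.ofReal q := by
  set S := {ξ : ℝ | q ≤ distFun μ ξ} with hS
  have hbdd := quantile_set_bddBelow μ hq0
  set a := quantile μ q with ha
  have hlt : ∀ ξ : ℝ, ξ < a → μ (Set.Iic ξ) ≤ ENNReal.ofReal q := by
    intro ξ hξ
    have hno : ¬ q ≤ distFun μ ξ := fun h => absurd (csInf_le hbdd h) (not_le.2 hξ)
    push_neg at hno
    rw [← distFun_eq μ ξ]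
    exact ENNReal.ofReal_le_ofReal hno.le
  have hmono : Monotone fun k : ℕ => Set.Iic (a - 1 / ((k:ℝ) + 1)) := by
    intro i j hij
    apply Set.Iic_subset_Iic.2
    have : (1:ℝ) / ((j:ℝ)+1) ≤ 1 / ((i:ℝ)+1) := by
      apply one_div_le_one_div_of_le (by positivity)
      have : (i:ℝ) ≤ j := by exact_mod_cast hij
      linarith
    linarith
  have hun : ⋃ k : ℕ, Set.Iic (a - 1 / ((k:ℝ) + 1)) = Set.Iio a := by
    ext x
    simp only [Set.mem_iUnion, Set.mem_Iic, Set.mem_Iio]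
    constructor
    · rintro ⟨k, hk⟩
      have : (0:ℝ) < 1 / ((k:ℝ)+1) := by positivity
      linarith
    · intro hx
      obtain ⟨k, hk⟩ := exists_nat_gt (1 / (a - x))
      refine ⟨k, ?_⟩
      have hk0 : 0 < 1 / (a - x) := by
        apply div_pos one_pos; linarith
      have : 1 / ((k:ℝ) + 1) < a - x := by
        rw [div_lt_iff₀ (by positivity)]
        rw [div_lt_iff₀ (by linarith)] at hk
        nlinarith
      linarith
  have h := tendsto_measure_iUnion_atTop (μ := μ) hmono
  rw [hun] at h
  refine le_of_tendsto h (Filter.Eventually.of_forall fun k => hlt _ ?_)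
  have : (0:ℝ) < 1/((k:ℝ)+1) := by positivity
  linarith

/-- `μ (Ioi ξ_{1-p}) ≤ p`. -/
lemma measure_Ioi_quantile_le {p : ℝ} (hp0 : 0 < p) (hp1 : p < 1) :
    μ (Set.Ioi (quantile μ (1 - p))) ≤ ENNReal.ofReal p := by
  have hq := distFun_quantile_ge μ (q := 1 - p) (by linarith) (by linarith)
  set b := quantile μ (1 - p)
  have hIic : ENNReal.ofReal (1 - p) ≤ μ (Set.Iic b) := by
    calc ENNReal.ofReal (1 - p) ≤ ENNReal.ofReal (distFun μ b) := ENNReal.ofReal_le_ofReal hq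
      _ = μ (Set.Iic b) := distFun_eq μ b
  have hcompl : μ (Set.Ioi b) = 1 - μ (Set.Iic b) := by
    rw [← Set.compl_Iic, measure_compl measurableSet_Iic (measure_ne_top μ _), measure_univ]
  rw [hcompl]
  calc (1 : ℝ≥0∞) - μ (Set.Iic b) ≤ 1 - ENNReal.ofReal (1 - p) := tsub_le_tsub_left hIic 1
    _ = ENNReal.ofReal 1 - ENNReal.ofReal (1 - p) := by rw [ENNReal.ofReal_one]
    _ = ENNReal.ofReal (1 - (1 - p)) := (ENNReal.ofReal_sub 1 (by linarith)).symm
    _ = ENNReal.ofReal p := by ring_nf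

end aux

/-- The empirical range `D_n = max_i X_i - min_i X_i` of `n` i.i.d. samples is at least
`ξ_p - ξ_{1-p}` except with probability `2·exp(-n(1-p)/2)`. -/
theorem stmt13 (μ : Measure ℝ) [IsProbabilityMeasure μ]
    (n : ℕ) (hn : 0 < n) (p : ℝ) (hp0 : 0 < p) (hp1 : p < 1) :
    ((Measure.pi fun _ : Fin n => μ)
        {ω | (⨆ i, ω i) - (⨅ i, ω i) < quantile μ p - quantile μ (1 - p)}).toReal ≤
      2 * Real.exp (-(n * (1 - p)) / 2) := by
  haveI : NeZero n := ⟨hn.ne'⟩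
  set a := quantile μ p
  set b := quantile μ (1 - p)
  set ν : Measure (Fin n → ℝ) := Measure.pi fun _ : Fin n => μ
  -- inclusion
  have hsub : {ω : Fin n → ℝ | (⨆ i, ω i) - (⨅ i, ω i) < a - b} ⊆
      (Set.pi Set.univ fun _ : Fin n => Set.Iio a) ∪
      (Set.pi Set.univ fun _ : Fin n => Set.Ioi b) := by
    intro ω hω
    simp only [Set.mem_setOf_eq] at hω
    by_cases hcase : (⨆ i, ω i) < a
    · left
      intro i _
      exact lt_of_le_of_lt (le_ciSup (Set.Finite.bddAbove (Set.finite_range ω)) i) hcase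
    · right
      push_neg at hcase
      intro i _
      have hinf : b < ⨅ i, ω i := by linarith
      exact lt_of_lt_of_le hinf (ciInf_le (Set.Finite.bddBelow (Set.finite_range ω)) i)
  have hA : ν (Set.pi Set.univ fun _ : Fin n => Set.Iio a) ≤ ENNReal.ofReal p ^ n := by
    rw [Measure.pi_pi]
    simp only [Finset.prod_const, Finset.card_univ, Fintype.card_fin]
    exact pow_le_pow_left' (measure_Iio_quantile_le μ hp0 hp1) n
  have hB : ν (Set.pi Set.univ fun _ : Fin n => Set.Ioi b) ≤ ENNReal.ofReal p ^ n := by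
    rw [Measure.pi_pi]
    simp only [Finset.prod_const, Finset.card_univ, Fintype.card_fin]
    exact pow_le_pow_left' (measure_Ioi_quantile_le μ hp0 hp1) n
  have hmeas : ν {ω : Fin n → ℝ | (⨆ i, ω i) - (⨅ i, ω i) < a - b} ≤
      2 * ENNReal.ofReal p ^ n := by
    calc ν _ ≤ ν ((Set.pi Set.univ fun _ : Fin n => Set.Iio a) ∪
          (Set.pi Set.univ fun _ : Fin n => Set.Ioi b)) := measure_mono hsub
      _ ≤ ν (Set.pi Set.univ fun _ : Fin n => Set.Iio a) +
          ν (Set.pi Set.univ fun _ : Fin n => Set.Ioi b) := measure_union_le _ _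
      _ ≤ ENNReal.ofReal p ^ n + ENNReal.ofReal p ^ n := add_le_add hA hB
      _ = 2 * ENNReal.ofReal p ^ n := (two_mul _).symm
  have hfin : (2 : ℝ≥0∞) * ENNReal.ofReal p ^ n ≠ ⊤ := by
    apply ENNReal.mul_ne_top (by simp)
    exact ENNReal.pow_ne_top ENNReal.ofReal_ne_top
  have htr := ENNReal.toReal_mono hfin hmeas
  have htr2 : ((2 : ℝ≥0∞) * ENNReal.ofReal p ^ n).toReal = 2 * p ^ n := by
    rw [ENNReal.toReal_mul, ENNReal.toReal_pow, ENNReal.toReal_ofReal hp0.le]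
    simp
  rw [htr2] at htr
  refine le_trans htr ?_
  -- 2 * p^n ≤ 2 * exp(-(n(1-p))/2)
  have hp_exp : p ≤ Real.exp (p - 1) := by
    have := Real.add_one_le_exp (p - 1)
    linarith
  have h1 : p ^ n ≤ Real.exp (p - 1) ^ n := pow_le_pow_left₀ hp0.le hp_exp n
  have h2 : Real.exp (p - 1) ^ n = Real.exp ((n : ℝ) * (p - 1)) := by
    rw [← Real.exp_nat_mul]
  have h3 : Real.exp ((n : ℝ) * (p - 1)) ≤ Real.exp (-(n * (1 - p)) / 2) := by
    apply Real.exp_le_exp.2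
    have hn0 : (0:ℝ) ≤ n := Nat.cast_nonneg n
    nlinarith
  nlinarith [Real.exp_pos (-(n * (1 - p)) / 2)]
end

section
/- Let X be a real random variable with finite essential infimum X₋ = ess inf X and essential supremum X₊ = ess sup X, and essential diameter D = X₊ − X₋. Then for every ε > 0, the tail function satisfies τ^X(ε) ≥ min( 𝔽(X₋ + (ε/(2(1+ε)))·D), 1 − 𝔽(X₊ − (ε/(2(1+ε)))·D) ), where 𝔽 is the distribution function of X. -/
open MeasureTheory Real

/-- The essential diameter `D = ess sup X - ess inf X` of a law `μ` on `ℝ`. -/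
noncomputable def essDiam (μ : MeasureTheory.Measure ℝ) : ℝ :=
  essSup id μ - essInf id μ

/-- The tail function `τ^X(ε) = sup {t : ξ_{1-t} - ξ_t ≥ D/(1+ε)}`. -/
noncomputable def tailFun (μ : MeasureTheory.Measure ℝ) (ε : ℝ) : ℝ :=
  sSup {t : ℝ | essDiam μ / (1 + ε) ≤ quantile μ (1 - t) - quantile μ t}

theorem stmt15 (μ : Measure ℝ) [IsProbabilityMeasure μ]
    (C : ℝ) (hbdd : ∀ᵐ x ∂μ, |x| ≤ C)
    (ε : ℝ) (hε : 0 < ε) :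
    min (distFun μ (essInf id μ + ε / (2 * (1 + ε)) * essDiam μ))
        (1 - distFun μ (essSup id μ - ε / (2 * (1 + ε)) * essDiam μ)) ≤
      tailFun μ ε := by
  set m := essInf id μ with hm
  set M := essSup id μ with hMdef
  have hε1 : (0:ℝ) < 1 + ε := by linarith
  have hbU : Filter.IsBoundedUnder (· ≤ ·) (ae μ) (id : ℝ → ℝ) :=
    ⟨C, by filter_upwards [hbdd] with x hx; exact (abs_le.1 hx).2⟩
  have hbL : Filter.IsBoundedUnder (· ≥ ·) (ae μ) (id : ℝ → ℝ) :=
    ⟨-C, by filter_upwards [hbdd] with x hx; exact (abs_le.1 hx).1⟩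
  have haeM : ∀ᵐ x ∂μ, x ≤ M := ae_le_essSup hbU
  have haem : ∀ᵐ x ∂μ, m ≤ x := ae_essInf_le hbL
  -- basic facts about distFun
  have Fmono : Monotone (distFun μ) := fun a b hab =>
    ENNReal.toReal_mono (measure_ne_top μ _) (measure_mono (Set.Iic_subset_Iic.2 hab))
  have Fnonneg : ∀ ξ, 0 ≤ distFun μ ξ := fun ξ => ENNReal.toReal_nonneg
  have Fle1 : ∀ ξ, distFun μ ξ ≤ 1 := fun ξ => by
    have := prob_le_one (μ := μ) (s := Set.Iic ξ)
    simpa [distFun] using ENNReal.toReal_mono ENNReal.one_ne_top this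
  have hFM : distFun μ M = 1 := by
    have h0 : μ (Set.Iic M)ᶜ = 0 := by
      rw [Set.compl_Iic]
      simpa [Set.Ioi_def, not_le] using ae_iff.1 haeM
    have := (prob_compl_eq_zero_iff (μ := μ) measurableSet_Iic).1 h0
    simp [distFun, this]
  have hF0 : ∀ ξ, ξ < m → distFun μ ξ = 0 := by
    intro ξ hξ
    have h0 : μ {x : ℝ | x < m} = 0 := by
      simpa [ae_iff, not_le] using haem
    have : μ (Set.Iic ξ) = 0 :=
      measure_mono_null (fun x hx => lt_of_le_of_lt hx hξ) h0
    simp [distFun, this]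
  set D := essDiam μ with hD
  have hDeq : D = M - m := rfl
  set r := ε / (2 * (1 + ε)) * D with hr
  set t₀ := min (distFun μ (m + r)) (1 - distFun μ (M - r)) with ht₀
  set S := {t : ℝ | D / (1 + ε) ≤ quantile μ (1 - t) - quantile μ t} with hS
  show t₀ ≤ sSup S
  -- quantiles at extreme levels
  have qbig : ∀ t : ℝ, 1 < t → quantile μ t = 0 := by
    intro t ht
    have : {ξ : ℝ | t ≤ distFun μ ξ} = ∅ := by
      ext ξ; simp only [Set.mem_setOf_eq, Set.mem_empty_iff_false, iff_false, not_le]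
      exact lt_of_le_of_lt (Fle1 ξ) ht
    rw [quantile, this, Real.sInf_empty]
  have qneg : ∀ t : ℝ, t < 0 → quantile μ t = 0 := by
    intro t ht
    have : {ξ : ℝ | t ≤ distFun μ ξ} = Set.univ := by
      ext ξ; simp only [Set.mem_setOf_eq, Set.mem_univ, iff_true]
      exact le_of_lt (lt_of_lt_of_le ht (Fnonneg ξ))
    rw [quantile, this]
    exact Real.sInf_of_not_bddBelow (by
      rintro ⟨b, hb⟩
      have := hb (Set.mem_univ (b - 1))
      linarith)
  by_cases hDpos : 0 < D
  · -- main case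
    have hrnn : 0 ≤ r := by positivity
    have hSle1 : S ⊆ Set.Iic 1 := by
      intro t ht
      rw [Set.mem_Iic]
      by_contra hgt
      push_neg at hgt
      have h1 : quantile μ t = 0 := qbig t hgt
      have h2 : quantile μ (1 - t) = 0 := qneg _ (by linarith)
      have := ht
      rw [hS, Set.mem_setOf_eq, h1, h2] at this
      have : D / (1 + ε) ≤ 0 := by linarith
      have := div_pos hDpos hε1
      linarith
    have hbdd : BddAbove S := ⟨1, hSle1⟩
    have hSnn : ∀ t ∈ S, 0 ≤ t := by
      intro t ht
      by_contra hneg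
      push_neg at hneg
      have h1 : quantile μ t = 0 := qneg t hneg
      have h2 : quantile μ (1 - t) = 0 := qbig _ (by linarith)
      rw [hS, Set.mem_setOf_eq, h1, h2] at ht
      have : D / (1 + ε) ≤ 0 := by linarith
      have := div_pos hDpos hε1
      linarith
    have key : ∀ t, 0 < t → t < t₀ → t ∈ S := by
      intro t ht0 htt
      have ht1 : t < distFun μ (m + r) := lt_of_lt_of_le htt (min_le_left _ _)
      have ht2 : distFun μ (M - r) < 1 - t := by
        have := lt_of_lt_of_le htt (min_le_right _ _)
        linarith
      have hq1 : quantile μ t ≤ m + r := by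
        apply csInf_le
        · refine ⟨m, fun ξ hξ => ?_⟩
          by_contra hlt
          push_neg at hlt
          have := hF0 ξ hlt
          rw [Set.mem_setOf_eq, this] at hξ
          linarith
        · exact le_of_lt ht1
      have hq2 : M - r ≤ quantile μ (1 - t) := by
        apply le_csInf
        · exact ⟨M, by simp only [Set.mem_setOf_eq, hFM]; linarith⟩
        · intro ξ hξ
          by_contra hlt
          push_neg at hlt
          have := Fmono (le_of_lt hlt)
          rw [Set.mem_setOf_eq] at hξ
          linarith
      rw [hS, Set.mem_setOf_eq]
      have halg : (M - r) - (m + r) = D / (1 + ε) := by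
        rw [hr, hDeq]
        field_simp
        ring
      linarith
    refine le_of_forall_lt fun c hc => ?_
    rcases lt_or_ge c 0 with hcneg | hcnn
    · exact lt_of_lt_of_le hcneg (Real.sSup_nonneg hSnn)
    · have ht0 : 0 < (c + t₀) / 2 := by linarith
      have htl : (c + t₀) / 2 < t₀ := by linarith
      have hmem : (c + t₀) / 2 ∈ S := key _ ht0 htl
      have := le_csSup hbdd hmem
      linarith
  · -- degenerate case : D ≤ 0
    push_neg at hDpos
    have hrnp : r ≤ 0 := by
      rw [hr]
      exact mul_nonpos_of_nonneg_of_nonpos (by positivity) hDpos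
    have hFMr : 1 ≤ distFun μ (M - r) := by
      have := Fmono (show M ≤ M - r by linarith)
      rw [hFM] at this; exact this
    have hlhs : t₀ ≤ 0 := le_trans (min_le_right _ _) (by linarith)
    have hSunb : ¬ BddAbove S := by
      rintro ⟨b, hb⟩
      have hmem : max 2 (b + 1) ∈ S := by
        have hgt : 1 < max 2 (b + 1) := lt_of_lt_of_le one_lt_two (le_max_left _ _)
        rw [hS, Set.mem_setOf_eq, qbig _ hgt, qneg _ (by linarith)]
        have : D / (1 + ε) ≤ 0 := div_nonpos_of_nonpos_of_nonneg hDpos (le_of_lt hε1)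
        linarith
      have := hb hmem
      have := le_max_right 2 (b + 1)
      linarith
    rw [Real.sSup_of_not_bddAbove hSunb]
    exact hlhs
end
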